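/- The KL divergence between two von Mises densities with the same mean direction ν and concentrations τ₁, τ₂ simplifies to log(I₀(τ₂)/I₀(τ₁)) + (τ₁ - τ₂)·I₁(τ₁)/I₀(τ₁), and this quantity is nonnegative and equals 0 iff τ₁ = τ₂. -/

import Mathlib

open Real intervalIntegral

/-- Modified Bessel function of the first kind of order 0. -/
noncomputable def besselI0 (τ : ℝ) : ℝ := (1 / π) * ∫ t in (0 : ℝ)..π, Real.exp (τ * Real.cos t)

/-- Modified Bessel function of the first kind of order 1. -/
noncomputable def besselI1 (τ : ℝ) : ℝ :=
  (1 / π) * ∫ t in (0 : ℝ)..π, Real.exp (τ * Real.cos t) * Real.cos t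

/-- The von Mises density with mean direction `ν` and concentration `τ`. -/
noncomputable def vonMisesDensity (ν τ θ : ℝ) : ℝ :=
  Real.exp (τ * Real.cos (θ - ν)) / (2 * π * besselI0 τ)

/-- KL divergence between two von Mises densities over `[-π, π]`. -/
noncomputable def klVonMises (ν₁ τ₁ ν₂ τ₂ : ℝ) : ℝ :=
  ∫ θ in (-π)..π,
    vonMisesDensity ν₁ τ₁ θ * Real.log (vonMisesDensity ν₁ τ₁ θ / vonMisesDensity ν₂ τ₂ θ)

lemma shift_even_integral (g : ℝ → ℝ) (hc : Continuous g) (hp : Function.Periodic g (2*π))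
    (he : ∀ x, g (-x) = g x) (ν : ℝ) :
    ∫ θ in (-π)..π, g (θ - ν) = 2 * ∫ t in (0:ℝ)..π, g t := by
  rw [intervalIntegral.integral_comp_sub_right]
  have h1 : (-π - ν) + 2*π = π - ν := by ring
  have h2 : (-π) + 2*π = π := by ring
  have := hp.intervalIntegral_add_eq (-π - ν) (-π)
  rw [h1, h2] at this
  rw [this]
  have hsplit : ∫ t in (-π)..π, g t = (∫ t in (-π)..(0:ℝ), g t) + ∫ t in (0:ℝ)..π, g t :=
    (intervalIntegral.integral_add_adjacent_intervals (hc.intervalIntegrable _ _)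
      (hc.intervalIntegrable _ _)).symm
  have hneg : ∫ t in (-π)..(0:ℝ), g t = ∫ t in (0:ℝ)..π, g t := by
    have := intervalIntegral.integral_comp_neg (a := (0:ℝ)) (b := π) (f := g)
    simp only [he, neg_zero] at this
    rw [← this]
  rw [hsplit, hneg]; ring

lemma intA (ν τ : ℝ) :
    ∫ θ in (-π)..π, Real.exp (τ * Real.cos (θ - ν)) = 2 * π * besselI0 τ := by
  have h := shift_even_integral (fun t => Real.exp (τ * Real.cos t)) (by continuity)
    (fun x => by simp [Real.cos_add_two_pi]) (fun x => by simp) ν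
  rw [h, besselI0]; field_simp

lemma intB (ν τ : ℝ) :
    ∫ θ in (-π)..π, Real.exp (τ * Real.cos (θ - ν)) * Real.cos (θ - ν) = 2 * π * besselI1 τ := by
  have h := shift_even_integral (fun t => Real.exp (τ * Real.cos t) * Real.cos t) (by continuity)
    (fun x => by simp [Real.cos_add_two_pi]) (fun x => by simp) ν
  rw [h, besselI1]; field_simp

lemma besselI0_pos (τ : ℝ) : 0 < besselI0 τ := by
  have h : 0 < ∫ t in (0:ℝ)..π, Real.exp (τ * Real.cos t) :=
    intervalIntegral_pos_of_pos
      ((by continuity : Continuous fun t => Real.exp (τ * Real.cos t)).intervalIntegrable _ _)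
      (fun x => Real.exp_pos _) Real.pi_pos
  exact mul_pos (by positivity) h

lemma vm_pos (ν τ θ : ℝ) : 0 < vonMisesDensity ν τ θ := by
  have := besselI0_pos τ
  have := Real.pi_pos
  unfold vonMisesDensity; positivity

lemma vm_cont (ν τ : ℝ) : Continuous (vonMisesDensity ν τ) := by
  unfold vonMisesDensity; fun_prop

lemma vm_integral_one (ν τ : ℝ) : ∫ θ in (-π)..π, vonMisesDensity ν τ θ = 1 := by
  have hA := besselI0_pos τ
  have hπ := Real.pi_pos
  unfold vonMisesDensity
  rw [intervalIntegral.integral_div, intA]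
  field_simp

lemma vm_integral_cos (ν τ : ℝ) :
    ∫ θ in (-π)..π, vonMisesDensity ν τ θ * Real.cos (θ - ν) = besselI1 τ / besselI0 τ := by
  have hA := besselI0_pos τ
  have hπ := Real.pi_pos
  have heq : (fun θ => vonMisesDensity ν τ θ * Real.cos (θ - ν))
      = fun θ => (Real.exp (τ * Real.cos (θ - ν)) * Real.cos (θ - ν)) / (2 * π * besselI0 τ) := by
    funext θ; unfold vonMisesDensity; ring
  rw [heq, intervalIntegral.integral_div, intB]
  field_simp

lemma log_ratio (ν τ₁ τ₂ θ : ℝ) :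
    Real.log (vonMisesDensity ν τ₁ θ / vonMisesDensity ν τ₂ θ)
      = Real.log (besselI0 τ₂ / besselI0 τ₁) + (τ₁ - τ₂) * Real.cos (θ - ν) := by
  have hA := besselI0_pos τ₁
  have hB := besselI0_pos τ₂
  have hπ := Real.pi_pos
  unfold vonMisesDensity
  rw [Real.log_div (by positivity) (by positivity),
      Real.log_div (Real.exp_pos _).ne' (by positivity),
      Real.log_div (Real.exp_pos _).ne' (by positivity),
      Real.log_div hB.ne' hA.ne',
      Real.log_mul (by positivity) hA.ne', Real.log_mul (by positivity) hB.ne',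
      Real.log_exp, Real.log_exp]
  ring

lemma klaux_le {p q : ℝ} (hp : 0 < p) (hq : 0 < q) : p - q ≤ p * Real.log (p / q) := by
  have h := Real.log_le_sub_one_of_pos (x := q / p) (by positivity)
  have hlog : Real.log (q / p) = - Real.log (p / q) := by
    rw [← Real.log_inv]; congr 1; field_simp
  rw [hlog] at h
  have h2 : 1 - q / p ≤ Real.log (p / q) := by linarith
  calc p - q = p * (1 - q / p) := by field_simp
    _ ≤ p * Real.log (p / q) := by nlinarith

lemma klaux_lt {p q : ℝ} (hp : 0 < p) (hq : 0 < q) (hne : p ≠ q) :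
    p - q < p * Real.log (p / q) := by
  have hne' : q / p ≠ 1 := by
    intro h; apply hne; field_simp at h; linarith
  have h := Real.log_lt_sub_one_of_pos (x := q / p) (by positivity) hne'
  have hlog : Real.log (q / p) = - Real.log (p / q) := by
    rw [← Real.log_inv]; congr 1; field_simp
  rw [hlog] at h
  have h2 : 1 - q / p < Real.log (p / q) := by linarith
  calc p - q = p * (1 - q / p) := by field_simp
    _ < p * Real.log (p / q) := by nlinarith

lemma kl_formula (ν τ₁ τ₂ : ℝ) :
    klVonMises ν τ₁ ν τ₂ =
      Real.log (besselI0 τ₂ / besselI0 τ₁) + (τ₁ - τ₂) * (besselI1 τ₁ / besselI0 τ₁) := by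
  set C := Real.log (besselI0 τ₂ / besselI0 τ₁) with hC
  have key : klVonMises ν τ₁ ν τ₂
      = ∫ θ in (-π)..π, (C * vonMisesDensity ν τ₁ θ
          + (τ₁ - τ₂) * (vonMisesDensity ν τ₁ θ * Real.cos (θ - ν))) := by
    unfold klVonMises
    apply intervalIntegral.integral_congr
    intro θ _
    simp only [log_ratio]; ring
  rw [key, intervalIntegral.integral_add (f := fun θ => C * vonMisesDensity ν τ₁ θ)
    (g := fun θ => (τ₁ - τ₂) * (vonMisesDensity ν τ₁ θ * Real.cos (θ - ν)))
    ((continuous_const.mul (vm_cont ν τ₁)).intervalIntegrable _ _)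
    ((continuous_const.mul ((vm_cont ν τ₁).mul (by continuity))).intervalIntegrable _ _),
    intervalIntegral.integral_const_mul, intervalIntegral.integral_const_mul,
    vm_integral_one, vm_integral_cos]
  ring

noncomputable def gfun (ν τ₁ τ₂ θ : ℝ) : ℝ :=
  Real.log (besselI0 τ₂ / besselI0 τ₁) * vonMisesDensity ν τ₁ θ
    + (τ₁ - τ₂) * (vonMisesDensity ν τ₁ θ * Real.cos (θ - ν))

lemma gfun_cont (ν τ₁ τ₂ : ℝ) : Continuous (gfun ν τ₁ τ₂) := by
  unfold gfun; exact (continuous_const.mul (vm_cont ν τ₁)).add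
    (continuous_const.mul ((vm_cont ν τ₁).mul (by continuity)))

lemma gfun_eq (ν τ₁ τ₂ θ : ℝ) :
    gfun ν τ₁ τ₂ θ
      = vonMisesDensity ν τ₁ θ * Real.log (vonMisesDensity ν τ₁ θ / vonMisesDensity ν τ₂ θ) := by
  unfold gfun; rw [log_ratio]; ring

lemma kl_eq_intg (ν τ₁ τ₂ : ℝ) :
    klVonMises ν τ₁ ν τ₂ = ∫ θ in (-π)..π, gfun ν τ₁ τ₂ θ := by
  unfold klVonMises
  apply intervalIntegral.integral_congr
  intro θ _
  exact (gfun_eq ν τ₁ τ₂ θ).symm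

noncomputable def Hfun (ν τ₁ τ₂ θ : ℝ) : ℝ :=
  gfun ν τ₁ τ₂ θ - vonMisesDensity ν τ₁ θ + vonMisesDensity ν τ₂ θ

lemma Hfun_cont (ν τ₁ τ₂ : ℝ) : Continuous (Hfun ν τ₁ τ₂) := by
  unfold Hfun; exact ((gfun_cont ν τ₁ τ₂).sub (vm_cont ν τ₁)).add (vm_cont ν τ₂)

lemma Hfun_eq (ν τ₁ τ₂ θ : ℝ) :
    Hfun ν τ₁ τ₂ θ
      = vonMisesDensity ν τ₁ θ * Real.log (vonMisesDensity ν τ₁ θ / vonMisesDensity ν τ₂ θ)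
        - vonMisesDensity ν τ₁ θ + vonMisesDensity ν τ₂ θ := by
  unfold Hfun; rw [gfun_eq]

lemma Hfun_nonneg (ν τ₁ τ₂ θ : ℝ) : 0 ≤ Hfun ν τ₁ τ₂ θ := by
  rw [Hfun_eq]
  have := klaux_le (vm_pos ν τ₁ θ) (vm_pos ν τ₂ θ)
  linarith

lemma Hfun_pos (ν τ₁ τ₂ θ : ℝ) (hne : vonMisesDensity ν τ₁ θ ≠ vonMisesDensity ν τ₂ θ) :
    0 < Hfun ν τ₁ τ₂ θ := by
  rw [Hfun_eq]
  have := klaux_lt (vm_pos ν τ₁ θ) (vm_pos ν τ₂ θ) hne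
  linarith

lemma int_Hfun (ν τ₁ τ₂ : ℝ) :
    ∫ θ in (-π)..π, Hfun ν τ₁ τ₂ θ = klVonMises ν τ₁ ν τ₂ := by
  unfold Hfun
  rw [intervalIntegral.integral_add (f := fun θ => gfun ν τ₁ τ₂ θ - vonMisesDensity ν τ₁ θ)
      (g := fun θ => vonMisesDensity ν τ₂ θ)
      (((gfun_cont ν τ₁ τ₂).sub (vm_cont ν τ₁)).intervalIntegrable _ _)
      ((vm_cont ν τ₂).intervalIntegrable _ _),
    intervalIntegral.integral_sub ((gfun_cont ν τ₁ τ₂).intervalIntegrable _ _)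
      ((vm_cont ν τ₁).intervalIntegrable _ _),
    vm_integral_one, vm_integral_one, ← kl_eq_intg]
  ring

lemma kl_nonneg (ν τ₁ τ₂ : ℝ) : 0 ≤ klVonMises ν τ₁ ν τ₂ := by
  rw [← int_Hfun]
  exact intervalIntegral.integral_nonneg (by linarith [Real.pi_pos])
    (fun u _ => Hfun_nonneg ν τ₁ τ₂ u)

lemma exists_ne_point (ν τ₁ τ₂ : ℝ) (hne : τ₁ ≠ τ₂) :
    ∃ θ₀ ∈ Set.Ioo (-π) π, vonMisesDensity ν τ₁ θ₀ ≠ vonMisesDensity ν τ₂ θ₀ := by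
  have hA := besselI0_pos τ₁
  have hB := besselI0_pos τ₂
  have hπ := Real.pi_pos
  have hD : τ₁ - τ₂ ≠ 0 := sub_ne_zero.mpr hne
  have eqc : ∀ θ, vonMisesDensity ν τ₁ θ = vonMisesDensity ν τ₂ θ →
      (τ₁ - τ₂) * Real.cos (θ - ν) = Real.log (besselI0 τ₁) - Real.log (besselI0 τ₂) := by
    intro θ hPQ
    have h := log_ratio ν τ₁ τ₂ θ
    rw [hPQ, div_self (vm_pos ν τ₂ θ).ne', Real.log_one,
      Real.log_div hB.ne' hA.ne'] at h
    linarith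
  by_contra hall
  push_neg at hall
  have e0 := eqc 0 (hall 0 ⟨by linarith, hπ⟩)
  have e1 := eqc (π/2) (hall (π/2) ⟨by linarith, by linarith⟩)
  have e2 := eqc (-(π/2)) (hall (-(π/2)) ⟨by linarith, by linarith⟩)
  rw [zero_sub, Real.cos_neg] at e0
  rw [Real.cos_pi_div_two_sub] at e1
  have c2 : Real.cos (-(π/2) - ν) = -Real.sin ν := by
    have h : -(π/2) - ν = -(π/2 + ν) := by ring
    rw [h, Real.cos_neg, Real.cos_add]; simp
  rw [c2] at e2
  have hsin : Real.sin ν = 0 := by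
    have hmul : (τ₁ - τ₂) * Real.sin ν = 0 := by linarith
    rcases mul_eq_zero.mp hmul with h | h
    · exact absurd h hD
    · exact h
  have hcos : Real.cos ν = 0 := by
    rw [hsin, mul_zero] at e1
    have hmul : (τ₁ - τ₂) * Real.cos ν = 0 := by linarith
    rcases mul_eq_zero.mp hmul with h | h
    · exact absurd h hD
    · exact h
  nlinarith [Real.sin_sq_add_cos_sq ν]

lemma kl_pos (ν τ₁ τ₂ : ℝ) (hne : τ₁ ≠ τ₂) : 0 < klVonMises ν τ₁ ν τ₂ := by
  obtain ⟨θ₀, hmem, hθne⟩ := exists_ne_point ν τ₁ τ₂ hne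
  rw [← int_Hfun]
  rw [intervalIntegral.integral_pos_iff_support_of_nonneg_ae
    (Filter.Eventually.of_forall (Hfun_nonneg ν τ₁ τ₂))
    ((Hfun_cont ν τ₁ τ₂).intervalIntegrable _ _)]
  refine ⟨by linarith [Real.pi_pos], ?_⟩
  have hU : IsOpen (Set.Ioo (-π) π ∩ Hfun ν τ₁ τ₂ ⁻¹' Set.Ioi 0) :=
    isOpen_Ioo.inter (isOpen_Ioi.preimage (Hfun_cont ν τ₁ τ₂))
  have hsub : Set.Ioo (-π) π ∩ Hfun ν τ₁ τ₂ ⁻¹' Set.Ioi 0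
      ⊆ Function.support (Hfun ν τ₁ τ₂) ∩ Set.Ioc (-π) π := by
    rintro x ⟨hx1, hx2⟩
    exact ⟨(Set.mem_Ioi.mp hx2).ne', Set.Ioo_subset_Ioc_self hx1⟩
  exact lt_of_lt_of_le
    (hU.measure_pos MeasureTheory.volume ⟨θ₀, hmem, Hfun_pos ν τ₁ τ₂ θ₀ hθne⟩)
    (MeasureTheory.measure_mono hsub)

theorem kl_vonMises_same_mean (ν τ₁ τ₂ : ℝ) (hτ₁ : 0 < τ₁) (hτ₂ : 0 < τ₂) :
    klVonMises ν τ₁ ν τ₂ =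
        Real.log (besselI0 τ₂ / besselI0 τ₁) + (τ₁ - τ₂) * (besselI1 τ₁ / besselI0 τ₁) ∧
      0 ≤ klVonMises ν τ₁ ν τ₂ ∧ (klVonMises ν τ₁ ν τ₂ = 0 ↔ τ₁ = τ₂) := by
  refine ⟨kl_formula ν τ₁ τ₂, kl_nonneg ν τ₁ τ₂, ?_, ?_⟩
  · intro hKL
    by_contra hne
    exact absurd hKL (ne_of_gt (kl_pos ν τ₁ τ₂ hne))
  · intro h12
    subst h12
    rw [kl_formula]
    simp [div_self (besselI0_pos τ₁).ne']
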